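/- arXiv:2002.12358 — 6 statements merged into one kernel-verified Lean document; each statement's English description precedes it below -/
import Mathlib

section
/- Let g be a Lie algebra, u a g-module, and T : u → g a linear map satisfying the classical Yang–Baxter equation T(T(u)·v − T(v)·u) = [T(u),T(v)] for all u,v ∈ u. Then the product u∘v := T(u)·v on u is left-symmetric. -/
/-- If `T : u → g` satisfies the classical Yang–Baxter equation, then the
product `u ∘ v := T(u)·v` on the `g`-module `u` is left-symmetric. -/
theorem cybe_product_leftSymmetric
    {k g u : Type*} [Field k] [CharZero k] [LieRing g] [LieAlgebra k g]
    [AddCommGroup u] [Module k u] [LieRingModule g u] [LieModule k g u]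
    (T : u →ₗ[k] g)
    (hT : ∀ a b : u, T (⁅T a, b⁆ - ⁅T b, a⁆) = ⁅T a, T b⁆)
    (a b c : u) :
    ⁅T ⁅T a, b⁆, c⁆ - ⁅T a, ⁅T b, c⁆⁆
      = ⁅T ⁅T b, a⁆, c⁆ - ⁅T b, ⁅T a, c⁆⁆ := by
  have h := hT a b
  rw [map_sub] at h
  have h2 : T ⁅T a, b⁆ = ⁅T a, T b⁆ + T ⁅T b, a⁆ := by
    rw [← h]; abel
  rw [h2, add_lie, lie_lie]
  abel
end

section
/- Let φ : u' → u be a g-module homomorphism and T : u → g satisfy the classical Yang–Baxter equation. Then T' := T∘φ : u' → g also satisfies the classical Yang–Baxter equation, and φ induces a Lie algebra homomorphism from u'_{T'} to u_T with the induced brackets [u,v]_{T'} = T'(u)·v − T'(v)·u and [u,v]_T = T(u)·v − T(v)·u. -/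
/-- If `φ : u' → u` is a `g`-module homomorphism and `T : u → g` satisfies the
CYBE, then `T' := T ∘ φ` also satisfies the CYBE, and `φ` is a Lie algebra
homomorphism from `u'_{T'}` to `u_T`. -/
theorem cybe_pullback_module_hom
    {k g u u' : Type*} [Field k] [CharZero k] [LieRing g] [LieAlgebra k g]
    [AddCommGroup u] [Module k u] [LieRingModule g u] [LieModule k g u]
    [AddCommGroup u'] [Module k u'] [LieRingModule g u'] [LieModule k g u']
    (φ : u' →ₗ[k] u) (hφ : ∀ (x : g) (a : u'), φ ⁅x, a⁆ = ⁅x, φ a⁆)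
    (T : u →ₗ[k] g)
    (hT : ∀ a b : u, T (⁅T a, b⁆ - ⁅T b, a⁆) = ⁅T a, T b⁆) :
    (∀ a b : u',
      (T ∘ₗ φ) (⁅(T ∘ₗ φ) a, b⁆ - ⁅(T ∘ₗ φ) b, a⁆) = ⁅(T ∘ₗ φ) a, (T ∘ₗ φ) b⁆)
    ∧ (∀ a b : u',
      φ (⁅(T ∘ₗ φ) a, b⁆ - ⁅(T ∘ₗ φ) b, a⁆) = ⁅T (φ a), φ b⁆ - ⁅T (φ b), φ a⁆) := by
  have key : ∀ a b : u',
      φ (⁅(T ∘ₗ φ) a, b⁆ - ⁅(T ∘ₗ φ) b, a⁆) = ⁅T (φ a), φ b⁆ - ⁅T (φ b), φ a⁆ := by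
    intro a b
    simp [map_sub, hφ]
  refine ⟨fun a b => ?_, key⟩
  simp only [LinearMap.comp_apply]
  rw [show φ (⁅T (φ a), b⁆ - ⁅T (φ b), a⁆) = ⁅T (φ a), φ b⁆ - ⁅T (φ b), φ a⁆ by simp [map_sub, hφ], hT]
end

section
/- Let g be a Lie algebra that is a direct vector space sum g = a ⊕ b with [a,a] ⊆ a, [g,b] ⊆ b, [g,[a,a]] = 0 and [g,[b,b]] = 0. Then the bilinear product defined by a₁·a₂ = (1/2)[a₁,a₂], a₁·b₁ = [a₁,b₁], b₁·a₁ = 0, b₁·b₂ = (1/2)[b₁,b₂] (for a₁,a₂ ∈ a, b₁,b₂ ∈ b) is a Novikov structure on g. -/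
/-- Let `g = a ⊕ b` (direct vector space sum) with `[a,a] ⊆ a`, `[g,b] ⊆ b`,
`[g,[a,a]] = 0` and `[g,[b,b]] = 0`. Then the bilinear product determined by
`a₁·a₂ = (1/2)[a₁,a₂]`, `a₁·b₁ = [a₁,b₁]`, `b₁·a₁ = 0`, `b₁·b₂ = (1/2)[b₁,b₂]`
is a Novikov structure on `g`. -/
theorem directSum_novikov_structure
    {k g : Type*} [Field k] [CharZero k] [LieRing g] [LieAlgebra k g]
    [FiniteDimensional k g]
    (a b : Submodule k g) (hcompl : IsCompl a b)
    (haa : ∀ x ∈ a, ∀ y ∈ a, ⁅x, y⁆ ∈ a)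
    (hgb : ∀ (x : g), ∀ y ∈ b, ⁅x, y⁆ ∈ b)
    (hgaa : ∀ (x : g), ∀ y ∈ a, ∀ z ∈ a, ⁅x, ⁅y, z⁆⁆ = 0)
    (hgbb : ∀ (x : g), ∀ y ∈ b, ∀ z ∈ b, ⁅x, ⁅y, z⁆⁆ = 0)
    (P : g →ₗ[k] g →ₗ[k] g)
    (hPaa : ∀ x ∈ a, ∀ y ∈ a, P x y = (2 : k)⁻¹ • ⁅x, y⁆)
    (hPab : ∀ x ∈ a, ∀ y ∈ b, P x y = ⁅x, y⁆)
    (hPba : ∀ x ∈ b, ∀ y ∈ a, P x y = 0)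
    (hPbb : ∀ x ∈ b, ∀ y ∈ b, P x y = (2 : k)⁻¹ • ⁅x, y⁆) :
    (∀ x y z : g, P x (P y z) - P (P x y) z = P y (P x z) - P (P y x) z)
    ∧ (∀ x y z : g, P (P x y) z = P (P x z) y)
    ∧ (∀ x y : g, P x y - P y x = ⁅x, y⁆) := by
  -- decomposition of an arbitrary element
  have hdec : ∀ x : g, ∃ u ∈ a, ∃ v ∈ b, u + v = x := by
    intro x
    have hx : x ∈ a ⊔ b := by rw [hcompl.sup_eq_top]; trivial
    exact Submodule.mem_sup.mp hx
  -- closed formula for P on decomposed elements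
  have key : ∀ xa ∈ a, ∀ xb ∈ b, ∀ ya ∈ a, ∀ yb ∈ b,
      P (xa + xb) (ya + yb)
        = (2 : k)⁻¹ • ⁅xa, ya⁆ + (⁅xa, yb⁆ + (2 : k)⁻¹ • ⁅xb, yb⁆) := by
    intro xa hxa xb hxb ya hya yb hyb
    simp only [map_add, LinearMap.add_apply]
    rw [hPaa xa hxa ya hya, hPab xa hxa yb hyb, hPba xb hxb ya hya,
      hPbb xb hxb yb hyb]
    abel
  -- formula for P x (P y z)
  have hP1 : ∀ xa ∈ a, ∀ xb ∈ b, ∀ ya ∈ a, ∀ yb ∈ b, ∀ za ∈ a, ∀ zb ∈ b,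
      P (xa + xb) (P (ya + yb) (za + zb))
        = ⁅xa, ⁅ya, zb⁆⁆ + (2 : k)⁻¹ • ⁅xb, ⁅ya, zb⁆⁆ := by
    intro xa hxa xb hxb ya hya yb hyb za hza zb hzb
    have mema : (2 : k)⁻¹ • ⁅ya, za⁆ ∈ a := a.smul_mem _ (haa _ hya _ hza)
    have memb : ⁅ya, zb⁆ + (2 : k)⁻¹ • ⁅yb, zb⁆ ∈ b :=
      b.add_mem (hgb _ _ hzb) (b.smul_mem _ (hgb _ _ hzb))
    rw [key ya hya yb hyb za hza zb hzb, key xa hxa xb hxb _ mema _ memb]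
    simp [lie_add, lie_smul, hgaa _ _ hya _ hza, hgbb _ _ hyb _ hzb]
  -- formula for P (P x y) z
  have hP2 : ∀ xa ∈ a, ∀ xb ∈ b, ∀ ya ∈ a, ∀ yb ∈ b, ∀ za ∈ a, ∀ zb ∈ b,
      P (P (xa + xb) (ya + yb)) (za + zb)
        = (2 : k)⁻¹ • ⁅⁅xa, yb⁆, zb⁆ := by
    intro xa hxa xb hxb ya hya yb hyb za hza zb hzb
    have mema : (2 : k)⁻¹ • ⁅xa, ya⁆ ∈ a := a.smul_mem _ (haa _ hxa _ hya)
    have memb : ⁅xa, yb⁆ + (2 : k)⁻¹ • ⁅xb, yb⁆ ∈ b :=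
      b.add_mem (hgb _ _ hyb) (b.smul_mem _ (hgb _ _ hyb))
    rw [key xa hxa xb hxb ya hya yb hyb, key _ mema _ memb za hza zb hzb]
    have e1 : ⁅⁅xa, ya⁆, za⁆ = 0 := by
      rw [← lie_skew, hgaa _ _ hxa _ hya, neg_zero]
    have e2 : ⁅⁅xa, ya⁆, zb⁆ = 0 := by
      rw [← lie_skew, hgaa _ _ hxa _ hya, neg_zero]
    have e3 : ⁅⁅xb, yb⁆, zb⁆ = 0 := by
      rw [← lie_skew, hgbb _ _ hxb _ hyb, neg_zero]
    simp [add_lie, smul_lie, e1, e2, e3]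
  refine ⟨?_, ?_, ?_⟩
  · intro x y z
    obtain ⟨xa, hxa, xb, hxb, rfl⟩ := hdec x
    obtain ⟨ya, hya, yb, hyb, rfl⟩ := hdec y
    obtain ⟨za, hza, zb, hzb, rfl⟩ := hdec z
    rw [hP1 xa hxa xb hxb ya hya yb hyb za hza zb hzb,
      hP2 xa hxa xb hxb ya hya yb hyb za hza zb hzb,
      hP1 ya hya yb hyb xa hxa xb hxb za hza zb hzb,
      hP2 ya hya yb hyb xa hxa xb hxb za hza zb hzb]
    have h1 : ⁅xa, ⁅ya, zb⁆⁆ = ⁅ya, ⁅xa, zb⁆⁆ := by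
      have h0 : ⁅⁅xa, ya⁆, zb⁆ = 0 := by
        rw [← lie_skew, hgaa _ _ hxa _ hya, neg_zero]
      rw [leibniz_lie, h0, zero_add]
    have h2 : ⁅⁅xa, yb⁆, zb⁆ = -⁅yb, ⁅xa, zb⁆⁆ := by
      have h0 : ⁅xa, ⁅yb, zb⁆⁆ = 0 := hgbb _ _ hyb _ hzb
      rw [leibniz_lie] at h0
      exact eq_neg_of_add_eq_zero_left h0
    have h3 : ⁅⁅ya, xb⁆, zb⁆ = -⁅xb, ⁅ya, zb⁆⁆ := by
      have h0 : ⁅ya, ⁅xb, zb⁆⁆ = 0 := hgbb _ _ hxb _ hzb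
      rw [leibniz_lie] at h0
      exact eq_neg_of_add_eq_zero_left h0
    rw [h1, h2, h3]
    module
  · intro x y z
    obtain ⟨xa, hxa, xb, hxb, rfl⟩ := hdec x
    obtain ⟨ya, hya, yb, hyb, rfl⟩ := hdec y
    obtain ⟨za, hza, zb, hzb, rfl⟩ := hdec z
    rw [hP2 xa hxa xb hxb ya hya yb hyb za hza zb hzb,
      hP2 xa hxa xb hxb za hza zb hzb ya hya yb hyb]
    congr 1
    have h0 : ⁅xa, ⁅yb, zb⁆⁆ = 0 := hgbb _ _ hyb _ hzb
    rw [leibniz_lie] at h0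
    rw [eq_neg_of_add_eq_zero_left h0, lie_skew]
  · intro x y
    obtain ⟨xa, hxa, xb, hxb, rfl⟩ := hdec x
    obtain ⟨ya, hya, yb, hyb, rfl⟩ := hdec y
    rw [key xa hxa xb hxb ya hya yb hyb, key ya hya yb hyb xa hxa xb hxb]
    rw [← lie_skew ya xa, ← lie_skew ya xb, ← lie_skew yb xb,
      add_lie, lie_add, lie_add]
    match_scalars <;> field_simp <;> norm_num
end

section
/- Let g be a finite-dimensional Lie algebra admitting a codimension-one ideal b with [b,b] ⊆ Z(g). Then g admits a Novikov structure. -/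
/-- A finite-dimensional Lie algebra admitting a codimension-one ideal `b`
with `[b,b] ⊆ Z(g)` admits a Novikov structure. -/
theorem codimOne_ideal_novikov
    {k g : Type*} [Field k] [CharZero k] [LieRing g] [LieAlgebra k g]
    [FiniteDimensional k g]
    (b : LieIdeal k g)
    (hcodim : Module.finrank k (g ⧸ b.toSubmodule) = 1)
    (hZ : ∀ x ∈ b, ∀ y ∈ b, ⁅x, y⁆ ∈ LieAlgebra.center k g) :
    ∃ P : g →ₗ[k] g →ₗ[k] g,
      (∀ x y z : g, P x (P y z) - P (P x y) z = P y (P x z) - P (P y x) z)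
      ∧ (∀ x y z : g, P (P x y) z = P (P x z) y)
      ∧ (∀ x y : g, P x y - P y x = ⁅x, y⁆) := by
  classical
  let B : Module.Basis (Fin 1) k (g ⧸ b.toSubmodule) := Module.basisUnique (Fin 1) hcodim
  obtain ⟨e, he⟩ := Submodule.Quotient.mk_surjective b.toSubmodule (B 0)
  let φ : g →ₗ[k] k := (B.coord 0).comp b.toSubmodule.mkQ
  let σ : g →ₗ[k] g := LinearMap.id - (LinearMap.toSpanSingleton k g e).comp φ
  have hσ0 : ∀ x, σ x = x - φ x • e := fun x => rfl
  have hmk : ∀ x : g, b.toSubmodule.mkQ x = φ x • B 0 := by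
    intro x
    have := B.sum_repr (b.toSubmodule.mkQ x)
    simpa [Fin.sum_univ_one, φ, Module.Basis.coord_apply] using this.symm
  have hσb : ∀ x, σ x ∈ b := by
    intro x
    have h : b.toSubmodule.mkQ (σ x) = 0 := by
      rw [hσ0, map_sub, map_smul, hmk]
      have : b.toSubmodule.mkQ e = B 0 := he
      rw [this, sub_self]
    exact (Submodule.Quotient.mk_eq_zero _).mp h
  have hφb : ∀ u : g, u ∈ b → φ u = 0 := by
    intro u hu
    have : b.toSubmodule.mkQ u = 0 := (Submodule.Quotient.mk_eq_zero _).mpr hu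
    simp [φ, this]
  have hσid : ∀ u : g, u ∈ b → σ u = u := by
    intro u hu; rw [hσ0, hφb u hu, zero_smul, sub_zero]
  -- centrality
  have hz2 : ∀ u v w : g, u ∈ b → v ∈ b → ⁅w, ⁅u, v⁆⁆ = 0 := by
    intro u v w hu hv
    have := hZ u hu v hv
    rw [LieModule.mem_maxTrivSubmodule] at this
    exact this w
  have hz1 : ∀ u v w : g, u ∈ b → v ∈ b → ⁅⁅u, v⁆, w⁆ = 0 := by
    intro u v w hu hv
    rw [← lie_skew, hz2 u v w hu hv, neg_zero]
  have hswap : ∀ u v : g, u ∈ b → v ∈ b → ⁅⁅e, u⁆, v⁆ = -⁅u, ⁅e, v⁆⁆ := by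
    intro u v hu hv
    have h := leibniz_lie e u v
    rw [hz2 u v e hu hv] at h
    exact eq_neg_of_add_eq_zero_left h.symm
  -- the Novikov product
  set P : g →ₗ[k] g →ₗ[k] g := LinearMap.mk₂ k
      (fun x y => (2:k)⁻¹ • ⁅σ x, σ y⁆ + φ x • ⁅e, σ y⁆)
      (by intro m n p
          simp only [map_add, add_lie, smul_add, add_smul]
          abel)
      (by intro c m p
          simp only [map_smul, smul_lie, smul_add, smul_smul, mul_comm]
          rfl)
      (by intro m n p
          simp only [map_add, lie_add, smul_add]
          abel)
      (by intro c m p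
          simp only [map_smul, lie_smul, smul_add, smul_smul, mul_comm]) with hPset
  have hPdef : ∀ x y : g, P x y = (2:k)⁻¹ • ⁅σ x, σ y⁆ + φ x • ⁅e, σ y⁆ :=
    fun x y => rfl
  have hPb : ∀ x y : g, P x y ∈ b := by
    intro x y
    rw [hPdef]
    exact b.add_mem (b.smul_mem _ (b.lie_mem (hσb y))) (b.smul_mem _ (b.lie_mem (hσb y)))
  have hσP : ∀ x y : g, σ (P x y) = P x y := fun x y => hσid _ (hPb x y)
  have hφP : ∀ x y : g, φ (P x y) = 0 := fun x y => hφb _ (hPb x y)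
  -- key expansions
  have hOuter : ∀ x y z : g,
      P (P x y) z = (2:k)⁻¹ • (φ x • ⁅⁅e, σ y⁆, σ z⁆) := by
    intro x y z
    rw [hPdef (P x y) z, hσP, hφP, zero_smul, add_zero, hPdef x y, add_lie, smul_lie,
      smul_lie, hz1 _ _ _ (hσb x) (hσb y), smul_zero, zero_add]
  have hInner : ∀ x y z : g,
      P x (P y z) = (2:k)⁻¹ • (φ y • ⁅σ x, ⁅e, σ z⁆⁆) + φ x • (φ y • ⁅e, ⁅e, σ z⁆⁆) := by
    intro x y z
    rw [hPdef x (P y z), hσP, hPdef y z, lie_add, lie_smul, lie_smul,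
      hz2 _ _ _ (hσb y) (hσb z), smul_zero, zero_add, lie_add, lie_smul, lie_smul,
      hz2 _ _ _ (hσb y) (hσb z), smul_zero, zero_add]
  refine ⟨P, ?_, ?_, ?_⟩
  · intro x y z
    rw [hInner x y z, hInner y x z, hOuter x y z, hOuter y x z,
      hswap _ _ (hσb y) (hσb z), hswap _ _ (hσb x) (hσb z)]
    module
  · intro x y z
    rw [hOuter x y z, hOuter x z y, hswap _ _ (hσb y) (hσb z),
      ← lie_skew (σ y) ⁅e, σ z⁆, neg_neg]
  · intro x y
    have hx : x = σ x + φ x • e := by rw [hσ0]; abel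
    have hy : y = σ y + φ y • e := by rw [hσ0]; abel
    conv_rhs => rw [hx, hy]
    rw [hPdef x y, hPdef y x, lie_add, add_lie, add_lie, lie_smul, lie_smul, smul_lie,
      smul_lie, lie_self, smul_zero, smul_zero, ← lie_skew (σ y) (σ x),
      ← lie_skew (σ x) e]
    have h2 : (2:k)⁻¹ + (2:k)⁻¹ = 1 := by norm_num
    match_scalars
    all_goals simp
    all_goals norm_num
end

section
/- Let g = a ⋊_φ b be a semidirect product of an abelian Lie algebra a and a Lie algebra b via φ : b → End(a). If b admits a Novikov product (x,y) ↦ x·y with φ(x·y) = 0 for all x,y ∈ b, then (a,x)∘(b,y) := (φ(x)b, x·y) is a Novikov product on g compatible with the Lie bracket. -/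
/-- Let `g = a ⋊_φ b`. If `b` admits a Novikov product `x·y` with
`φ(x·y) = 0`, then `(a,x) ∘ (b,y) := (φ(x)b, x·y)` is a Novikov product on
`g = a × b` compatible with the semidirect product bracket. -/
theorem semidirect_novikov_lift
    {k a b : Type*} [Field k] [CharZero k]
    [AddCommGroup a] [Module k a] [LieRing b] [LieAlgebra k b]
    (φ : b →ₗ[k] Module.End k a)
    (hφ : ∀ x y : b, φ ⁅x, y⁆ = φ x * φ y - φ y * φ x)
    (m : b →ₗ[k] b →ₗ[k] b)
    (hls : ∀ x y z : b, m x (m y z) - m (m x y) z = m y (m x z) - m (m y x) z)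
    (hrc : ∀ x y z : b, m (m x y) z = m (m x z) y)
    (hcompat : ∀ x y : b, m x y - m y x = ⁅x, y⁆)
    (hker : ∀ x y : b, φ (m x y) = 0) :
    (∀ p q r : a × b,
      ((φ p.2 (φ q.2 r.1), m p.2 (m q.2 r.2)) : a × b)
        - (φ (m p.2 q.2) r.1, m (m p.2 q.2) r.2)
      = ((φ q.2 (φ p.2 r.1), m q.2 (m p.2 r.2)) : a × b)
        - (φ (m q.2 p.2) r.1, m (m q.2 p.2) r.2))
    ∧ (∀ p q r : a × b,
      ((φ (m p.2 q.2) r.1, m (m p.2 q.2) r.2) : a × b)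
        = (φ (m p.2 r.2) q.1, m (m p.2 r.2) q.2))
    ∧ (∀ p q : a × b,
      ((φ p.2 q.1, m p.2 q.2) : a × b) - (φ q.2 p.1, m q.2 p.2)
        = (φ p.2 q.1 - φ q.2 p.1, ⁅p.2, q.2⁆)) := by
  refine ⟨fun p q r => ?_, fun p q r => ?_, fun p q => ?_⟩
  · have h1 : φ p.2 (φ q.2 r.1) - φ q.2 (φ p.2 r.1) = 0 := by
      have := hφ p.2 q.2
      have h2 : φ ⁅p.2, q.2⁆ = 0 := by
        rw [← hcompat p.2 q.2, map_sub, hker, hker, sub_zero]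
      have h3 : (φ p.2 * φ q.2 - φ q.2 * φ p.2) r.1 = 0 := by
        rw [← this, h2]; rfl
      simpa using h3
    have h2 := hls p.2 q.2 r.2
    rw [Prod.ext_iff]
    constructor
    · simp only [Prod.fst_sub, hker, LinearMap.zero_apply, sub_zero]
      exact sub_eq_zero.mp h1
    · simpa using h2
  · rw [Prod.ext_iff]
    exact ⟨by simp [hker], hrc p.2 q.2 r.2⟩
  · rw [Prod.ext_iff]
    exact ⟨rfl, hcompat p.2 q.2⟩
end

section
/- Let g = (a, b, φ, Ω) be a two-step solvable Lie algebra given as an extension of an abelian Lie algebra b by an abelian Lie algebra a, with bracket [(a,x),(b,y)] = (φ(x)b − φ(y)a + Ω(x,y), 0), where φ : b → End(a) satisfies φ(x)φ(y) = φ(y)φ(x) and Ω is a 2-cocycle: φ(x)Ω(y,z) − φ(y)Ω(x,z) + φ(z)Ω(x,y) = 0. If there exists e ∈ b such that φ(e) is invertible, then the product (a,x)∘(b,y) := (φ(x)b + ω(x,y), 0) with ω(x,y) := φ(e)^{-1}φ(x)Ω(e,y) defines a Novikov structure on g. -/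
/-- Let `g = (a, b, φ, Ω)` be a two-step solvable Lie algebra on `a × b`
(`a`, `b` abelian) with bracket
`[(a,x),(b,y)] = (φ(x)b - φ(y)a + Ω(x,y), 0)`, where the operators `φ(x)`
commute and `Ω` is a skew-symmetric 2-cocycle. If `φ(e)` is invertible
(with inverse `ψ`) for some `e ∈ b`, then the product
`(a,x) ∘ (b,y) := (φ(x)b + ω(x,y), 0)` with `ω(x,y) := φ(e)⁻¹ φ(x) Ω(e,y)`
defines a Novikov structure on `g`. -/
theorem twoStepSolvable_invertible_novikov
    {k a b : Type*} [Field k] [CharZero k]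
    [AddCommGroup a] [Module k a] [AddCommGroup b] [Module k b]
    (φ : b →ₗ[k] Module.End k a)
    (hcomm : ∀ x y : b, φ x * φ y = φ y * φ x)
    (Ω : b →ₗ[k] b →ₗ[k] a)
    (hskew : ∀ x y : b, Ω x y = -Ω y x)
    (hcocycle : ∀ x y z : b,
      φ x (Ω y z) - φ y (Ω x z) + φ z (Ω x y) = 0)
    (e : b) (ψ : Module.End k a)
    (hψ₁ : ψ * φ e = 1) (hψ₂ : φ e * ψ = 1)
    (P : (a × b) → (a × b) → (a × b))
    (hP : P = fun u v => (φ u.2 v.1 + ψ (φ u.2 (Ω e v.2)), (0 : b))) :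
    (∀ u v w : a × b, P u (P v w) - P (P u v) w = P v (P u w) - P (P v u) w)
    ∧ (∀ u v w : a × b, P (P u v) w = P (P u w) v)
    ∧ (∀ u v : a × b,
        P u v - P v u = (φ u.2 v.1 - φ v.2 u.1 + Ω u.2 v.2, (0 : b))) := by
  subst hP
  -- ψ commutes with every φ x
  have hψφ : ∀ x : b, ψ * φ x = φ x * ψ := by
    intro x
    have h1 : ψ * φ x * (φ e * ψ) = ψ * φ x := by rw [hψ₂, mul_one]
    have h2 : ψ * φ x * (φ e * ψ) = φ x * ψ := by
      calc ψ * φ x * (φ e * ψ) = ψ * (φ x * φ e) * ψ := by noncomm_ring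
        _ = ψ * (φ e * φ x) * ψ := by rw [hcomm]
        _ = (ψ * φ e) * (φ x * ψ) := by noncomm_ring
        _ = φ x * ψ := by rw [hψ₁, one_mul]
    rw [← h1, h2]
  have hψφ' : ∀ (x : b) (c : a), ψ (φ x c) = φ x (ψ c) := by
    intro x c
    have := congrArg (fun f : Module.End k a => f c) (hψφ x)
    simpa using this
  refine ⟨?_, ?_, ?_⟩
  · intro u v w
    simp only [map_zero, LinearMap.zero_apply, add_zero]
    congr 1
    have hc : ∀ (x y : b) (c : a), φ x (φ y c) = φ y (φ x c) := by
      intro x y c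
      have := congrArg (fun f : Module.End k a => f c) (hcomm x y)
      simpa using this
    rw [map_add, map_add, hψφ', hψφ', hc u.2 v.2, hc u.2 v.2]
  · intro u v w
    simp [map_zero]
  · intro u v
    have hcoc := hcocycle u.2 v.2 e
    rw [hskew v.2 e, hskew u.2 e] at hcoc
    -- φ u.2 (-Ω e v.2) - φ v.2 (-Ω e u.2) + φ e (Ω u.2 v.2) = 0
    have key : φ e (Ω u.2 v.2) = φ u.2 (Ω e v.2) - φ v.2 (Ω e u.2) := by
      rw [map_neg, map_neg] at hcoc
      have h0 : φ e (Ω u.2 v.2) - (φ u.2 (Ω e v.2) - φ v.2 (Ω e u.2)) = 0 := by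
        rw [← hcoc]; abel
      exact sub_eq_zero.mp h0
    have key2 : ψ (φ u.2 (Ω e v.2)) - ψ (φ v.2 (Ω e u.2)) = Ω u.2 v.2 := by
      rw [← map_sub, ← key]
      have := congrArg (fun f : Module.End k a => f (Ω u.2 v.2)) hψ₁
      simpa using this
    simp only [Prod.mk_sub_mk, sub_zero]
    ext
    · simp only
      rw [show φ u.2 v.1 + ψ (φ u.2 (Ω e v.2)) - (φ v.2 u.1 + ψ (φ v.2 (Ω e u.2)))
          = φ u.2 v.1 - φ v.2 u.1 + (ψ (φ u.2 (Ω e v.2)) - ψ (φ v.2 (Ω e u.2))) by abel,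
        key2]
    · simp
end
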